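/- Let b be a standard Brownian bridge on [0,1] from 0 to 0. Then the processes Ab(t) = (b(t)-b(1-t))/2 and Sb(t) = (b(t)+b(1-t))/2, both restricted to t ∈ [0,1/2], are stochastically independent; moreover (Ab(t))_{t∈[0,1/2]} has the same law as (b(2t)/2)_{t∈[0,1/2]}, and (Sb(t))_{t∈[0,1/2]} has the same law as (W(2t)/2)_{t∈[0,1/2]} where W is a standard Brownian motion. -/

import Mathlib

open MeasureTheory ProbabilityTheory Set
noncomputable section

/-- `X` is a centered Gaussian process indexed by `D ⊆ ι` with covariance kernel `K`:
every finite linear combination of coordinates in `D` is a centered Gaussian random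
variable with the variance prescribed by `K`. -/
def IsCenteredGaussian {Ω ι : Type*} [MeasurableSpace Ω] (P : Measure Ω)
    (X : Ω → ι → ℝ) (D : Set ι) (K : ι → ι → ℝ) : Prop :=
  (∀ t, Measurable fun ω => X ω t) ∧
  ∀ (n : ℕ) (c : Fin n → ℝ) (t : Fin n → ι), (∀ i, t i ∈ D) →
    Measure.map (fun ω => ∑ i, c i * X ω (t i)) P =
      gaussianReal 0 (∑ i, ∑ j, c i * c j * K (t i) (t j)).toNNReal

/-- Standard Brownian motion on `[0,1]`. -/
def IsBrownianMotion {Ω : Type*} [MeasurableSpace Ω] (P : Measure Ω)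
    (W : Ω → ℝ → ℝ) : Prop :=
  IsCenteredGaussian P W (Icc 0 1) fun s t => min s t

/-- Standard Brownian bridge on `[0,1]` from `0` to `0`. -/
def IsBrownianBridge {Ω : Type*} [MeasurableSpace Ω] (P : Measure Ω)
    (b : Ω → ℝ → ℝ) : Prop :=
  IsCenteredGaussian P b (Icc 0 1) fun s t => min s t - s * t

/-- Standard Brownian sheet on `[0,1]²`. -/
def IsBrownianSheet {Ω : Type*} [MeasurableSpace Ω] (P : Measure Ω)
    (W : Ω → ℝ × ℝ → ℝ) : Prop :=
  IsCenteredGaussian P W (Icc 0 1 ×ˢ Icc 0 1)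
    fun t s => min t.1 s.1 * min t.2 s.2


set_option synthInstance.maxHeartbeats 1000000
set_option maxHeartbeats 2000000

namespace BridgeAux
open Real Filter



lemma covA {s t : ℝ} (hs : s ∈ Icc (0:ℝ) (1/2)) (ht : t ∈ Icc (0:ℝ) (1/2)) :
    (1/2)*(1/2)*(min s t - s*t) + (1/2)*(-(1/2))*(min s (1-t) - s*(1-t))
      + (-(1/2))*(1/2)*(min (1-s) t - (1-s)*t)
      + (-(1/2))*(-(1/2))*(min (1-s) (1-t) - (1-s)*(1-t))
      = min s t / 2 - s * t := by
  obtain ⟨hs0, hs1⟩ := hs; obtain ⟨ht0, ht1⟩ := ht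
  rcases le_total s t with h | h
  · rw [min_eq_left h, min_eq_left (by linarith : s ≤ 1 - t),
      min_eq_right (by linarith : t ≤ 1 - s), min_eq_right (by linarith : 1 - t ≤ 1 - s)]
    ring
  · rw [min_eq_right h, min_eq_left (by linarith : s ≤ 1 - t),
      min_eq_right (by linarith : t ≤ 1 - s), min_eq_left (by linarith : 1 - s ≤ 1 - t)]
    ring

lemma covS {s t : ℝ} (hs : s ∈ Icc (0:ℝ) (1/2)) (ht : t ∈ Icc (0:ℝ) (1/2)) :
    (1/2)*(1/2)*(min s t - s*t) + (1/2)*(1/2)*(min s (1-t) - s*(1-t))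
      + (1/2)*(1/2)*(min (1-s) t - (1-s)*t)
      + (1/2)*(1/2)*(min (1-s) (1-t) - (1-s)*(1-t))
      = min s t / 2 := by
  obtain ⟨hs0, hs1⟩ := hs; obtain ⟨ht0, ht1⟩ := ht
  rcases le_total s t with h | h
  · rw [min_eq_left h, min_eq_left (by linarith : s ≤ 1 - t),
      min_eq_right (by linarith : t ≤ 1 - s), min_eq_right (by linarith : 1 - t ≤ 1 - s)]
    ring
  · rw [min_eq_right h, min_eq_left (by linarith : s ≤ 1 - t),
      min_eq_right (by linarith : t ≤ 1 - s), min_eq_left (by linarith : 1 - s ≤ 1 - t)]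
    ring

lemma covAS {s t : ℝ} (hs : s ∈ Icc (0:ℝ) (1/2)) (ht : t ∈ Icc (0:ℝ) (1/2)) :
    (1/2)*(1/2)*(min s t - s*t) + (1/2)*(1/2)*(min s (1-t) - s*(1-t))
      + (-(1/2))*(1/2)*(min (1-s) t - (1-s)*t)
      + (-(1/2))*(1/2)*(min (1-s) (1-t) - (1-s)*(1-t))
      = 0 := by
  obtain ⟨hs0, hs1⟩ := hs; obtain ⟨ht0, ht1⟩ := ht
  rcases le_total s t with h | h
  · rw [min_eq_left h, min_eq_left (by linarith : s ≤ 1 - t),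
      min_eq_right (by linarith : t ≤ 1 - s), min_eq_right (by linarith : 1 - t ≤ 1 - s)]
    ring
  · rw [min_eq_right h, min_eq_left (by linarith : s ≤ 1 - t),
      min_eq_right (by linarith : t ≤ 1 - s), min_eq_left (by linarith : 1 - s ≤ 1 - t)]
    ring

lemma covSA {s t : ℝ} (hs : s ∈ Icc (0:ℝ) (1/2)) (ht : t ∈ Icc (0:ℝ) (1/2)) :
    (1/2)*(1/2)*(min s t - s*t) + (1/2)*(-(1/2))*(min s (1-t) - s*(1-t))
      + (1/2)*(1/2)*(min (1-s) t - (1-s)*t)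
      + (1/2)*(-(1/2))*(min (1-s) (1-t) - (1-s)*(1-t))
      = 0 := by
  obtain ⟨hs0, hs1⟩ := hs; obtain ⟨ht0, ht1⟩ := ht
  rcases le_total s t with h | h
  · rw [min_eq_left h, min_eq_left (by linarith : s ≤ 1 - t),
      min_eq_right (by linarith : t ≤ 1 - s), min_eq_right (by linarith : 1 - t ≤ 1 - s)]
    ring
  · rw [min_eq_right h, min_eq_left (by linarith : s ≤ 1 - t),
      min_eq_right (by linarith : t ≤ 1 - s), min_eq_left (by linarith : 1 - s ≤ 1 - t)]
    ring

lemma min_double {s t : ℝ} (hs : 0 ≤ s) (ht : 0 ≤ t) :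
    min (2*s) (2*t) = 2 * min s t := by
  rcases le_total s t with h | h
  · rw [min_eq_left (by linarith), min_eq_left h]
  · rw [min_eq_right (by linarith), min_eq_right h]

/-! ### PSD -/

lemma sumsum_integral_nonneg {n : ℕ} (c : Fin n → ℝ) (g : Fin n → ℝ → ℝ)
    (hint : ∀ i j, Integrable (fun x => g i x * g j x)) (V : Fin n → Fin n → ℝ)
    (hV : ∀ i j, V i j = ∫ x, g i x * g j x) :
    0 ≤ ∑ i, ∑ j, c i * c j * V i j := by
  have key : ∑ i, ∑ j, c i * c j * V i j = ∫ x, (∑ i, c i * g i x) ^ 2 := by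
    have hsq : ∀ x : ℝ, (∑ i, c i * g i x) ^ 2
        = ∑ i, ∑ j, (c i * c j) * (g i x * g j x) := by
      intro x
      rw [sq, Finset.sum_mul_sum]
      exact Finset.sum_congr rfl fun i _ => Finset.sum_congr rfl fun j _ => by ring
    rw [MeasureTheory.integral_congr_ae (Filter.Eventually.of_forall hsq)]
    rw [MeasureTheory.integral_finset_sum _ (fun i _ =>
      MeasureTheory.integrable_finset_sum _ (fun j _ => ((hint i j).const_mul _)))]
    refine Finset.sum_congr rfl fun i _ => ?_
    rw [MeasureTheory.integral_finset_sum _ (fun j _ => ((hint i j).const_mul _))]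
    refine Finset.sum_congr rfl fun j _ => ?_
    rw [MeasureTheory.integral_const_mul, hV]
  rw [key]
  exact MeasureTheory.integral_nonneg fun x => sq_nonneg _

/-- indicator building block for Brownian-type kernels. -/
def gW (u : ℝ) : ℝ → ℝ := (Ioc (0:ℝ) u).indicator 1

/-- building block for bridge kernels. -/
def gB (u : ℝ) : ℝ → ℝ := fun x => gW u x - u * gW 1 x

lemma integrable_ind (u : ℝ) : Integrable (gW u) := by
  unfold gW
  rw [MeasureTheory.integrable_indicator_iff measurableSet_Ioc]
  exact MeasureTheory.integrableOn_const measure_Ioc_lt_top.ne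

lemma gW_mul (u v : ℝ) : (fun x => gW u x * gW v x) = gW (min u v) := by
  funext x
  unfold gW
  rw [← Set.inter_indicator_mul]
  simp only [Set.Ioc_inter_Ioc, max_self, Pi.one_apply, mul_one]
  rfl

lemma integral_gW_mul (u v : ℝ) (hu : 0 ≤ u) (hv : 0 ≤ v) :
    ∫ x, gW u x * gW v x = min u v := by
  rw [gW_mul]
  unfold gW
  rw [MeasureTheory.integral_indicator measurableSet_Ioc]
  simp [Real.volume_Ioc, ENNReal.toReal_ofReal (le_min hu hv), hu, hv]

lemma integrable_gW_mul (u v : ℝ) : Integrable (fun x => gW u x * gW v x) := by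
  rw [gW_mul]; exact integrable_ind _

lemma integrable_gB_mul (u v : ℝ) : Integrable (fun x => gB u x * gB v x) := by
  have : (fun x => gB u x * gB v x) = fun x =>
      gW u x * gW v x - v * (gW u x * gW 1 x) - u * (gW 1 x * gW v x)
        + (u * v) * (gW 1 x * gW 1 x) := by
    funext x; unfold gB; ring
  rw [this]
  exact (((integrable_gW_mul u v).sub ((integrable_gW_mul u 1).const_mul v)).sub
    ((integrable_gW_mul 1 v).const_mul u)).add ((integrable_gW_mul 1 1).const_mul (u*v))

lemma integral_gB_mul (u v : ℝ) (hu : u ∈ Icc (0:ℝ) 1) (hv : v ∈ Icc (0:ℝ) 1) :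
    ∫ x, gB u x * gB v x = min u v - u * v := by
  have expand : (fun x => gB u x * gB v x) = fun x =>
      gW u x * gW v x - v * (gW u x * gW 1 x) - u * (gW 1 x * gW v x)
        + (u * v) * (gW 1 x * gW 1 x) := by
    funext x; unfold gB; ring
  rw [expand]
  have I1 : Integrable (fun x => gW u x * gW v x - v * (gW u x * gW 1 x)) :=
    (integrable_gW_mul u v).sub ((integrable_gW_mul u 1).const_mul v)
  have I2 : Integrable (fun x => gW u x * gW v x - v * (gW u x * gW 1 x)
      - u * (gW 1 x * gW v x)) := I1.sub ((integrable_gW_mul 1 v).const_mul u)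
  have I3 : Integrable (fun x => u * v * (gW 1 x * gW 1 x)) :=
    (integrable_gW_mul 1 1).const_mul (u*v)
  rw [MeasureTheory.integral_add I2 I3,
    MeasureTheory.integral_sub I1 ((integrable_gW_mul 1 v).const_mul u),
    MeasureTheory.integral_sub (integrable_gW_mul u v) ((integrable_gW_mul u 1).const_mul v),
    MeasureTheory.integral_const_mul, MeasureTheory.integral_const_mul,
    MeasureTheory.integral_const_mul,
    integral_gW_mul u v hu.1 hv.1, integral_gW_mul u 1 hu.1 zero_le_one,
    integral_gW_mul 1 v zero_le_one hv.1, integral_gW_mul 1 1 zero_le_one zero_le_one,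
    min_eq_left hu.2, min_eq_right hv.2, min_self]
  ring




lemma gaussianPDFReal_conv {v₁ v₂ : NNReal} (h1 : v₁ ≠ 0) (h2 : v₂ ≠ 0) (z x : ℝ) :
    gaussianPDFReal 0 v₁ x * gaussianPDFReal x v₂ z
      = gaussianPDFReal 0 (v₁ + v₂) z *
        gaussianPDFReal ((v₁ : ℝ) * z / ((v₁ : ℝ) + (v₂ : ℝ))) (v₁ * v₂ / (v₁ + v₂)) x := by
  have ha : (0:ℝ) < v₁ := lt_of_le_of_ne (v₁.coe_nonneg) (by exact_mod_cast (Ne.symm h1))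
  have hb : (0:ℝ) < v₂ := lt_of_le_of_ne (v₂.coe_nonneg) (by exact_mod_cast (Ne.symm h2))
  set a := (v₁ : ℝ)
  set b := (v₂ : ℝ)
  have hab : (0:ℝ) < a + b := by linarith
  unfold gaussianPDFReal
  have hc1 : ((v₁ + v₂ : NNReal) : ℝ) = a + b := by push_cast; ring
  have hc2 : ((v₁ * v₂ / (v₁ + v₂) : NNReal) : ℝ) = a * b / (a + b) := by push_cast; ring
  rw [hc1, hc2]
  have key1 : Real.sqrt (2*π*a) * Real.sqrt (2*π*b)
      = Real.sqrt (2*π*(a+b)) * Real.sqrt (2*π*(a*b/(a+b))) := by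
    rw [← Real.sqrt_mul (by positivity), ← Real.sqrt_mul (by positivity)]
    congr 1
    field_simp
  have key2 : -(x-0)^2/(2*a) + -(z-x)^2/(2*b)
      = -(z-0)^2/(2*(a+b)) + -(x - a*z/(a+b))^2/(2*(a*b/(a+b))) := by
    field_simp
    ring
  calc (Real.sqrt (2*π*a))⁻¹ * rexp (-(x-0)^2/(2*a))
        * ((Real.sqrt (2*π*b))⁻¹ * rexp (-(z-x)^2/(2*b)))
      = (Real.sqrt (2*π*a) * Real.sqrt (2*π*b))⁻¹
        * rexp (-(x-0)^2/(2*a) + -(z-x)^2/(2*b)) := by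
        rw [Real.exp_add, mul_inv]; ring
    _ = (Real.sqrt (2*π*(a+b)) * Real.sqrt (2*π*(a*b/(a+b))))⁻¹
        * rexp (-(z-0)^2/(2*(a+b)) + -(x - a*z/(a+b))^2/(2*(a*b/(a+b)))) := by
        rw [key1, key2]
    _ = (Real.sqrt (2*π*(a+b)))⁻¹ * rexp (-(z-0)^2/(2*(a+b)))
        * ((Real.sqrt (2*π*(a*b/(a+b))))⁻¹ * rexp (-(x - a*z/(a+b))^2/(2*(a*b/(a+b))))) := by
        rw [Real.exp_add, mul_inv]; ring

theorem gaussianReal_conv (v₁ v₂ : NNReal) :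
    ((gaussianReal 0 v₁).prod (gaussianReal 0 v₂)).map (fun p : ℝ × ℝ => p.1 + p.2)
      = gaussianReal 0 (v₁ + v₂) := by
  rcases eq_or_ne v₁ 0 with rfl | h1
  · rw [gaussianReal_zero_var, zero_add, Measure.dirac_prod,
      Measure.map_map measurable_add measurable_prodMk_left]
    have : ((fun p : ℝ × ℝ => p.1 + p.2) ∘ Prod.mk 0) = id := by
      funext y; simp
    rw [this, Measure.map_id]
  rcases eq_or_ne v₂ 0 with rfl | h2
  · rw [gaussianReal_zero_var, add_zero, Measure.prod_dirac,
      Measure.map_map measurable_add measurable_prodMk_right]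
    have : ((fun p : ℝ × ℝ => p.1 + p.2) ∘ (fun x => (x, (0:ℝ)))) = id := by
      funext y; simp
    rw [this, Measure.map_id]
  have h12 : v₁ + v₂ ≠ 0 := by
    simp only [ne_eq, add_eq_zero, not_and]; exact fun h => absurd h h1
  have h3 : v₁ * v₂ / (v₁ + v₂) ≠ 0 := by
    rw [ne_eq, div_eq_zero_iff]
    push_neg
    exact ⟨mul_ne_zero h1 h2, fun h => absurd h h12⟩
  have hjm : Measurable fun p : ℝ × ℝ => gaussianPDF p.1 v₂ p.2 := by
    refine Measurable.ennreal_ofReal ?_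
    unfold gaussianPDFReal
    fun_prop
  ext s hs
  rw [Measure.map_apply measurable_add hs, Measure.prod_apply (measurable_add hs)]
  have step1 : ∀ x : ℝ, (gaussianReal 0 v₂) (Prod.mk x ⁻¹' ((fun p : ℝ × ℝ => p.1 + p.2) ⁻¹' s))
      = ∫⁻ z in s, gaussianPDF x v₂ z := by
    intro x
    have hpre : (Prod.mk x ⁻¹' ((fun p : ℝ × ℝ => p.1 + p.2) ⁻¹' s))
        = (fun y => y + x) ⁻¹' s := by
      ext y; simp [add_comm]
    rw [hpre, ← Measure.map_apply (measurable_add_const x) hs, gaussianReal_map_add_const x,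
      zero_add, gaussianReal_apply x h2 s]
  simp only [step1]
  have hG : Measurable fun x : ℝ => ∫⁻ z in s, gaussianPDF x v₂ z :=
    Measurable.lintegral_prod_right' hjm
  rw [gaussianReal_of_var_ne_zero 0 h1,
    lintegral_withDensity_eq_lintegral_mul _ (measurable_gaussianPDF 0 v₁) hG]
  have step2 : ∀ x : ℝ, (gaussianPDF 0 v₁ * fun x => ∫⁻ z in s, gaussianPDF x v₂ z) x
      = ∫⁻ z in s, gaussianPDF 0 v₁ x * gaussianPDF x v₂ z := by
    intro x
    simp only [Pi.mul_apply]
    exact (MeasureTheory.lintegral_const_mul _ (hjm.comp (measurable_const.prodMk measurable_id))).symm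
  simp only [step2]
  rw [lintegral_lintegral_swap]
  swap
  · exact (((measurable_gaussianPDF 0 v₁).comp measurable_fst).mul hjm).aemeasurable
  have inner : ∀ z : ℝ, (∫⁻ x, gaussianPDF 0 v₁ x * gaussianPDF x v₂ z)
      = gaussianPDF 0 (v₁ + v₂) z := by
    intro z
    have hptw : ∀ x : ℝ, gaussianPDF 0 v₁ x * gaussianPDF x v₂ z
        = ENNReal.ofReal (gaussianPDFReal 0 (v₁ + v₂) z) *
          gaussianPDF ((v₁ : ℝ) * z / ((v₁ : ℝ) + (v₂ : ℝ))) (v₁ * v₂ / (v₁ + v₂)) x := by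
      intro x
      unfold gaussianPDF
      rw [← ENNReal.ofReal_mul (gaussianPDFReal_nonneg 0 v₁ x),
        gaussianPDFReal_conv h1 h2 z x,
        ENNReal.ofReal_mul (gaussianPDFReal_nonneg 0 (v₁ + v₂) z)]
    simp only [hptw]
    rw [MeasureTheory.lintegral_const_mul _ (measurable_gaussianPDF _ _),
      lintegral_gaussianPDF_eq_one _ h3, mul_one]
    rfl
  simp only [inner]
  exact (gaussianReal_apply 0 h12 s).symm


lemma map_sum_prod {Ω₁ Ω₂ : Type*} [MeasurableSpace Ω₁] [MeasurableSpace Ω₂]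
    (P₁ : Measure Ω₁) (P₂ : Measure Ω₂) [SFinite P₁] [SFinite P₂]
    {F : Ω₁ → ℝ} {G : Ω₂ → ℝ} (hF : Measurable F) (hG : Measurable G)
    {v₁ v₂ : NNReal} (h1 : P₁.map F = gaussianReal 0 v₁) (h2 : P₂.map G = gaussianReal 0 v₂) :
    (P₁.prod P₂).map (fun p => F p.1 + G p.2) = gaussianReal 0 (v₁ + v₂) := by
  have hc : (fun p : Ω₁ × Ω₂ => F p.1 + G p.2)
      = (fun q : ℝ × ℝ => q.1 + q.2) ∘ (Prod.map F G) := rfl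
  rw [hc, ← Measure.map_map measurable_add (hF.prodMap hG),
    ← Measure.map_prod_map _ _ hF hG, h1, h2, gaussianReal_conv]


variable {κ : Type*} [Fintype κ]

lemma measurable_lin (c : κ → ℝ) : Measurable (fun x : κ → ℝ => ∑ i, c i * x i) :=
  Finset.univ.measurable_sum (fun i _ => (measurable_pi_apply _).const_mul _)

/-- the character indexed by `k` on the torus `κ → AddCircle R`. -/
def torusChar (R : ℝ) (k : κ → ℤ) : C((κ → AddCircle R), ℂ) where
  toFun := fun y => ∏ i, fourier (k i) (y i)
  continuous_toFun := continuous_finset_prod _ fun i _ =>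
    (map_continuous (fourier (k i))).comp (continuous_apply i)

lemma torusChar_apply (R : ℝ) (k : κ → ℤ) (y : κ → AddCircle R) :
    torusChar R k y = ∏ i, fourier (k i) (y i) := rfl

lemma torusChar_mul (R : ℝ) (k l : κ → ℤ) :
    torusChar R k * torusChar R l = torusChar R (k + l) := by
  ext y
  simp only [ContinuousMap.mul_apply, torusChar_apply, Pi.add_apply, fourier_add]
  rw [← Finset.prod_mul_distrib]

lemma torusChar_zero (R : ℝ) : torusChar (κ := κ) R 0 = 1 := by
  ext y
  simp [torusChar_apply, fourier_zero]

lemma torusChar_star (R : ℝ) (k : κ → ℤ) :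
    star (torusChar R k) = torusChar R (-k) := by
  ext y
  simp only [ContinuousMap.star_apply, torusChar_apply, Pi.neg_apply, fourier_neg]
  rw [← map_prod]
  rfl

lemma torusChar_span (R : ℝ) :
    (Subalgebra.toSubmodule (Algebra.adjoin ℂ (Set.range (torusChar (κ := κ) R))))
      = Submodule.span ℂ (Set.range (torusChar (κ := κ) R)) := by
  rw [Algebra.adjoin_eq_span]
  congr 1
  let M : Submonoid C((κ → AddCircle R), ℂ) :=
    { carrier := Set.range (torusChar (κ := κ) R)
      mul_mem' := by
        rintro _ _ ⟨k, rfl⟩ ⟨l, rfl⟩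
        exact ⟨k + l, (torusChar_mul R k l).symm⟩
      one_mem' := ⟨0, torusChar_zero R⟩ }
  exact congrArg SetLike.coe (Submonoid.closure_eq M)

/-- The star subalgebra generated by torus characters. -/
def torusAlg (R : ℝ) : StarSubalgebra ℂ C((κ → AddCircle R), ℂ) where
  toSubalgebra := Algebra.adjoin ℂ (Set.range (torusChar (κ := κ) R))
  star_mem' := by
    intro x hx
    have hx' : x ∈ Submodule.span ℂ (Set.range (torusChar (κ := κ) R)) := by
      rw [← torusChar_span]; exact hx
    clear hx
    have hst : star x ∈ Submodule.span ℂ (Set.range (torusChar (κ := κ) R)) := by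
      induction hx' using Submodule.span_induction with
      | mem g hg =>
        obtain ⟨k, rfl⟩ := hg
        rw [torusChar_star]
        exact Submodule.subset_span ⟨-k, rfl⟩
      | zero => simpa using Submodule.zero_mem _
      | add a b _ _ ha hb => rw [star_add]; exact Submodule.add_mem _ ha hb
      | smul a g _ hg => rw [star_smul]; exact Submodule.smul_mem _ _ hg
    rw [← torusChar_span] at hst
    exact hst

lemma mem_torusAlg_iff_span (R : ℝ) (x : C((κ → AddCircle R), ℂ)) :
    x ∈ torusAlg (κ := κ) R ↔ x ∈ Submodule.span ℂ (Set.range (torusChar (κ := κ) R)) := by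
  rw [← torusChar_span]
  exact Iff.rfl

lemma torusAlg_separates (R : ℝ) (hR : 0 < R) [Fact (0 < R)] :
    (torusAlg (κ := κ) R).SeparatesPoints := by
  intro x y hxy
  obtain ⟨i, hi⟩ := Function.ne_iff.mp hxy
  classical
  have heval : ∀ z : κ → AddCircle R, torusChar R (Pi.single i 1) z = fourier 1 (z i) := by
    intro z
    rw [torusChar_apply]
    rw [Finset.prod_eq_single i (fun j _ hj => by rw [Pi.single_eq_of_ne hj, fourier_zero])
      (fun h => absurd (Finset.mem_univ i) h)]
    rw [Pi.single_eq_same]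
  have hmem : torusChar R (Pi.single i 1) ∈ torusAlg (κ := κ) R :=
    Algebra.subset_adjoin ⟨Pi.single i 1, rfl⟩
  refine ⟨_, Set.mem_image_of_mem _ hmem, ?_⟩
  rw [heval, heval]
  simp only [fourier_one]
  intro hcontra
  exact hi (AddCircle.injective_toCircle (ne_of_gt hR) (Subtype.coe_injective hcontra))

theorem torus_map_eq (μ ν : Measure (κ → ℝ))
    [IsProbabilityMeasure μ] [IsProbabilityMeasure ν]
    (hφ : ∀ c : κ → ℝ, ∫ x, Complex.exp (((∑ i, c i * x i : ℝ) : ℂ) * Complex.I) ∂μ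
      = ∫ x, Complex.exp (((∑ i, c i * x i : ℝ) : ℂ) * Complex.I) ∂ν)
    (R : ℝ) (hR : 0 < R) :
    μ.map (fun (x : κ → ℝ) (i : κ) => ((x i : ℝ) : AddCircle R))
      = ν.map (fun (x : κ → ℝ) (i : κ) => ((x i : ℝ) : AddCircle R)) := by
  classical
  haveI : Fact (0 < R) := ⟨hR⟩
  set Θ : (κ → ℝ) → (κ → AddCircle R) := fun x i => ((x i : ℝ) : AddCircle R) with hΘdef
  have hΘ : Measurable Θ :=
    measurable_pi_lambda _ (fun i => AddCircle.measurable_mk'.comp (measurable_pi_apply i))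
  haveI : IsProbabilityMeasure (μ.map Θ) := Measure.isProbabilityMeasure_map hΘ.aemeasurable
  haveI : IsProbabilityMeasure (ν.map Θ) := Measure.isProbabilityMeasure_map hΘ.aemeasurable
  have hintg : ∀ (g : C((κ → AddCircle R), ℂ)) (m : Measure (κ → AddCircle R))
      [IsFiniteMeasure m], Integrable g m := fun g m _ =>
    (BoundedContinuousFunction.mkOfCompact g).integrable m
  have hchar : ∀ k : κ → ℤ, ∫ y, torusChar R k y ∂(μ.map Θ) = ∫ y, torusChar R k y ∂(ν.map Θ) := by
    intro k
    rw [integral_map hΘ.aemeasurable (map_continuous (torusChar R k)).aestronglyMeasurable,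
      integral_map hΘ.aemeasurable (map_continuous (torusChar R k)).aestronglyMeasurable]
    have hev : ∀ x : κ → ℝ, torusChar R k (Θ x)
        = Complex.exp (((∑ i, (2 * π * (k i) / R) * x i : ℝ) : ℂ) * Complex.I) := by
      intro x
      rw [torusChar_apply]
      have hterm : ∀ i : κ, fourier (k i) (((x i : ℝ) : AddCircle R))
          = Complex.exp (((2 * π * (k i) / R * x i : ℝ) : ℂ) * Complex.I) := by
        intro i
        rw [fourier_coe_apply]
        congr 1
        push_cast
        ring
      calc ∏ i, fourier (k i) (Θ x i)
          = ∏ i, Complex.exp (((2 * π * (k i) / R * x i : ℝ) : ℂ) * Complex.I) :=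
            Finset.prod_congr rfl fun i _ => hterm i
        _ = Complex.exp (∑ i, ((2 * π * (k i) / R * x i : ℝ) : ℂ) * Complex.I) :=
            (Complex.exp_sum _ _).symm
        _ = Complex.exp (((∑ i, (2 * π * (k i) / R) * x i : ℝ) : ℂ) * Complex.I) := by
            congr 1
            rw [Complex.ofReal_sum, Finset.sum_mul]
    simp only [hev]
    exact hφ (fun i => 2 * π * (k i) / R)
  have halg : ∀ g ∈ torusAlg (κ := κ) R,
      ∫ y, g y ∂(μ.map Θ) = ∫ y, g y ∂(ν.map Θ) := by
    intro g hg
    rw [mem_torusAlg_iff_span] at hg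
    induction hg using Submodule.span_induction with
    | mem g hg => obtain ⟨k, rfl⟩ := hg; exact hchar k
    | zero => simp
    | add a b ha hb iha ihb =>
      simp only [ContinuousMap.add_apply]
      rw [integral_add (hintg a _) (hintg b _), integral_add (hintg a _) (hintg b _), iha, ihb]
    | smul a g hg ihg =>
      simp only [ContinuousMap.coe_smul, Pi.smul_apply]
      rw [integral_smul, integral_smul, ihg]
  have hdense : Dense ((torusAlg (κ := κ) R : Set C((κ → AddCircle R), ℂ))) := by
    have htop := ContinuousMap.starSubalgebra_topologicalClosure_eq_top_of_separatesPoints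
      (torusAlg (κ := κ) R) (torusAlg_separates R hR)
    rw [dense_iff_closure_eq]
    have hcl : closure ((torusAlg (κ := κ) R : Set C((κ → AddCircle R), ℂ)))
        = ((torusAlg (κ := κ) R).topologicalClosure : Set C((κ → AddCircle R), ℂ)) := rfl
    rw [hcl, htop]
    rfl
  have hcont : ∀ g : C((κ → AddCircle R), ℂ),
      ∫ y, g y ∂(μ.map Θ) = ∫ y, g y ∂(ν.map Θ) := by
    intro g
    have hg : g ∈ closure ((torusAlg (κ := κ) R : Set C((κ → AddCircle R), ℂ))) := by
      rw [dense_iff_closure_eq.mp hdense]; trivial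
    obtain ⟨u, hu_mem, hu_tend⟩ := mem_closure_iff_seq_limit.mp hg
    have hboundc : Continuous fun y : κ → AddCircle R => ‖g y‖ + 1 :=
      ((map_continuous g).norm).add continuous_const
    have hb : ∀ᶠ n in atTop, ∀ y, ‖u n y‖ ≤ ‖g y‖ + 1 := by
      have hev : ∀ᶠ n in atTop, dist (u n) g < 1 :=
        hu_tend (Metric.ball_mem_nhds g one_pos)
      refine hev.mono fun n hn y => ?_
      have h1 : dist (u n y) (g y) ≤ dist (u n) g := ContinuousMap.dist_apply_le_dist y
      have h2 : ‖u n y‖ - ‖g y‖ ≤ ‖u n y - g y‖ := norm_sub_norm_le _ _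
      rw [← dist_eq_norm] at h2
      linarith
    have hlim : ∀ y, Tendsto (fun n => u n y) atTop (nhds (g y)) := fun y =>
      ((continuous_eval_const y).tendsto g).comp hu_tend
    have key : ∀ (m : Measure (κ → AddCircle R)) [IsProbabilityMeasure m],
        Tendsto (fun n => ∫ y, u n y ∂m) atTop (nhds (∫ y, g y ∂m)) := by
      intro m _
      refine tendsto_integral_filter_of_dominated_convergence (fun y => ‖g y‖ + 1)
        (Eventually.of_forall fun n => (map_continuous (u n)).aestronglyMeasurable)
        (hb.mono fun n hn => ae_of_all _ hn)
        ((BoundedContinuousFunction.mkOfCompact ⟨_, hboundc⟩).integrable m)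
        (ae_of_all _ hlim)
    have huint : ∀ n, ∫ y, u n y ∂(μ.map Θ) = ∫ y, u n y ∂(ν.map Θ) := fun n =>
      halg (u n) (hu_mem n)
    have t1 := key (μ.map Θ)
    rw [funext huint] at t1
    exact tendsto_nhds_unique t1 (key (ν.map Θ))
  refine ext_of_forall_lintegral_eq_of_IsFiniteMeasure fun f => ?_
  have hfc : Continuous fun y : κ → AddCircle R => (RCLike.ofReal (K := ℂ) ((f y : ℝ))) :=
    RCLike.continuous_ofReal.comp (NNReal.continuous_coe.comp (map_continuous f))
  have hval := hcont ⟨_, hfc⟩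
  simp only [ContinuousMap.coe_mk] at hval
  rw [integral_ofReal, integral_ofReal] at hval
  have hreal : ∫ y, ((f y : ℝ)) ∂(μ.map Θ) = ∫ y, ((f y : ℝ)) ∂(ν.map Θ) :=
    RCLike.ofReal_injective (K := ℂ) hval
  have hfint : ∀ (m : Measure (κ → AddCircle R)) [IsProbabilityMeasure m],
      Integrable (fun y => ((f y : ℝ))) m := fun m _ =>
    (BoundedContinuousFunction.mkOfCompact
      ⟨_, NNReal.continuous_coe.comp (map_continuous f)⟩).integrable m
  rw [lintegral_coe_eq_integral _ (hfint (μ.map Θ)), lintegral_coe_eq_integral _ (hfint (ν.map Θ))]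
  exact congrArg ENNReal.ofReal hreal


theorem cramerWold (μ ν : Measure (κ → ℝ))
    [IsProbabilityMeasure μ] [IsProbabilityMeasure ν]
    (h : ∀ c : κ → ℝ, μ.map (fun x => ∑ i, c i * x i) = ν.map (fun x => ∑ i, c i * x i)) :
    μ = ν := by
  classical
  have hφ : ∀ c : κ → ℝ, ∫ x, Complex.exp (((∑ i, c i * x i : ℝ) : ℂ) * Complex.I) ∂μ
      = ∫ x, Complex.exp (((∑ i, c i * x i : ℝ) : ℂ) * Complex.I) ∂ν := by
    intro c
    have hcontc : Continuous fun t : ℝ => Complex.exp ((t : ℂ) * Complex.I) := by fun_prop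
    have h1 : ∫ x, Complex.exp (((∑ i, c i * x i : ℝ) : ℂ) * Complex.I) ∂μ
        = ∫ t, Complex.exp ((t : ℂ) * Complex.I) ∂(μ.map (fun x => ∑ i, c i * x i)) :=
      (integral_map (measurable_lin c).aemeasurable hcontc.aestronglyMeasurable).symm
    have h2 : ∫ x, Complex.exp (((∑ i, c i * x i : ℝ) : ℂ) * Complex.I) ∂ν
        = ∫ t, Complex.exp ((t : ℂ) * Complex.I) ∂(ν.map (fun x => ∑ i, c i * x i)) :=
      (integral_map (measurable_lin c).aemeasurable hcontc.aestronglyMeasurable).symm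
    rw [h1, h2, h c]
  have htorus : ∀ m : ℕ, 0 < (m:ℝ) →
      μ.map (fun (x : κ → ℝ) (i : κ) => ((x i : ℝ) : AddCircle (m:ℝ)))
      = ν.map (fun (x : κ → ℝ) (i : κ) => ((x i : ℝ) : AddCircle (m:ℝ))) :=
    fun m hm => torus_map_eq μ ν hφ (m:ℝ) hm
  set box : ℕ → Set (κ → ℝ) :=
    fun m => Set.pi Set.univ fun _ : κ => Set.Ioc (-(m:ℝ)/2) (-(m:ℝ)/2 + m) with hboxdef
  have hbox_meas : ∀ m, MeasurableSet (box m) :=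
    fun m => MeasurableSet.univ_pi fun i => measurableSet_Ioc
  have hbox_mono : Monotone box := by
    intro m m' hmm' x hx i hi
    have hxi := hx i (Set.mem_univ i)
    have hcast : (m:ℝ) ≤ (m':ℝ) := by exact_mod_cast hmm'
    exact ⟨by linarith [hxi.1], by linarith [hxi.2]⟩
  have hbox_univ : ⋃ m, box m = Set.univ := by
    refine Set.eq_univ_of_forall fun x => Set.mem_iUnion.2 ?_
    obtain ⟨m, hm⟩ := exists_nat_gt (2 * (∑ i, |x i|) + 1)
    refine ⟨m, fun i _ => ?_⟩
    have hxi : |x i| ≤ ∑ j, |x j| :=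
      Finset.single_le_sum (fun j _ => abs_nonneg (x j)) (Finset.mem_univ i)
    have h1 := neg_abs_le (x i)
    have h2 := le_abs_self (x i)
    have hS : (0:ℝ) ≤ ∑ j, |x j| := Finset.sum_nonneg fun j _ => abs_nonneg _
    exact ⟨by linarith, by linarith⟩
  have key : ∀ (m : ℕ), 0 < m → ∀ s : Set (κ → ℝ), MeasurableSet s → s ⊆ box m →
      μ s ≤ ν s + ν (box m)ᶜ ∧ ν s ≤ μ s + μ (box m)ᶜ := by
    intro m hm s hs hsub
    have hRpos : (0:ℝ) < (m:ℝ) := by exact_mod_cast hm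
    haveI : Fact ((0:ℝ) < (m:ℝ)) := ⟨hRpos⟩
    set Θ : (κ → ℝ) → (κ → AddCircle (m:ℝ)) := fun x i => ((x i : ℝ) : AddCircle (m:ℝ))
      with hΘdef
    have hΘ : Measurable Θ :=
      measurable_pi_lambda _ (fun i => AddCircle.measurable_mk'.comp (measurable_pi_apply i))
    set σ := AddCircle.measurableEquivIoc (m:ℝ) (-(m:ℝ)/2) with hσdef
    set Ψ : (κ → AddCircle (m:ℝ)) → (κ → ℝ) := fun y i => ((σ (y i) : Set.Ioc _ _) : ℝ)
      with hΨdef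
    have hΨ : Measurable Ψ := measurable_pi_lambda _ fun i =>
      measurable_subtype_coe.comp (σ.measurable.comp (measurable_pi_apply i))
    have hsec : ∀ x ∈ box m, Ψ (Θ x) = x := by
      intro x hx
      funext i
      have hxi : x i ∈ Set.Ioc (-(m:ℝ)/2) (-(m:ℝ)/2 + m) := hx i (Set.mem_univ i)
      show ((σ ((x i : AddCircle (m:ℝ)))) : ℝ) = x i
      have hσap : σ ((x i : AddCircle (m:ℝ))) = ⟨x i, hxi⟩ := by
        show (AddCircle.equivIoc (m:ℝ) (-(m:ℝ)/2)) (x i) = ⟨x i, hxi⟩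
        rw [Equiv.apply_eq_iff_eq_symm_apply]
        rfl
      rw [hσap]
    set T := Ψ ⁻¹' s with hTdef
    have hTmeas : MeasurableSet T := hΨ hs
    have hsplit : Θ ⁻¹' T ∩ box m = s := by
      ext x
      constructor
      · rintro ⟨hx1, hx2⟩
        have hsx := hsec x hx2
        rw [hTdef, Set.mem_preimage, Set.mem_preimage, hsx] at hx1
        exact hx1
      · intro hx
        have hxb := hsub hx
        refine ⟨?_, hxb⟩
        rw [hTdef, Set.mem_preimage, Set.mem_preimage, hsec x hxb]
        exact hx
    have hμT : μ (Θ ⁻¹' T) = ν (Θ ⁻¹' T) := by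
      rw [← Measure.map_apply hΘ hTmeas, ← Measure.map_apply hΘ hTmeas, htorus m hRpos]
    have hdiff : ∀ ρ : Measure (κ → ℝ), ρ (Θ ⁻¹' T \ box m) ≤ ρ (box m)ᶜ :=
      fun ρ => measure_mono fun x hx => hx.2
    constructor
    · calc μ s = μ (Θ ⁻¹' T ∩ box m) := by rw [hsplit]
        _ ≤ μ (Θ ⁻¹' T) := measure_mono Set.inter_subset_left
        _ = ν (Θ ⁻¹' T) := hμT
        _ ≤ ν (Θ ⁻¹' T ∩ box m) + ν (Θ ⁻¹' T \ box m) := measure_le_inter_add_diff _ _ _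
        _ ≤ ν s + ν (box m)ᶜ := by rw [hsplit]; exact add_le_add le_rfl (hdiff ν)
    · calc ν s = ν (Θ ⁻¹' T ∩ box m) := by rw [hsplit]
        _ ≤ ν (Θ ⁻¹' T) := measure_mono Set.inter_subset_left
        _ = μ (Θ ⁻¹' T) := hμT.symm
        _ ≤ μ (Θ ⁻¹' T ∩ box m) + μ (Θ ⁻¹' T \ box m) := measure_le_inter_add_diff _ _ _
        _ ≤ μ s + μ (box m)ᶜ := by rw [hsplit]; exact add_le_add le_rfl (hdiff μ)
  have hcomp : ∀ (ρ : Measure (κ → ℝ)) [IsProbabilityMeasure ρ],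
      Tendsto (fun m => ρ (box m)ᶜ) atTop (nhds 0) := by
    intro ρ _
    have h0 : ⋂ m, (box m)ᶜ = ∅ := by
      rw [← Set.compl_iUnion, hbox_univ, Set.compl_univ]
    have ht := tendsto_measure_iInter_atTop (μ := ρ)
      (fun m => (hbox_meas m).compl.nullMeasurableSet)
      (fun m m' hm => Set.compl_subset_compl.mpr (hbox_mono hm))
      ⟨0, measure_ne_top _ _⟩
    rw [h0] at ht
    simpa [Function.comp_def] using ht
  have hbdd : ∀ (m₀ : ℕ) (s : Set (κ → ℝ)), MeasurableSet s → s ⊆ box m₀ → μ s = ν s := by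
    intro m₀ s hs hsub
    have hev1 : ∀ᶠ m in atTop, μ s ≤ ν s + ν (box m)ᶜ := by
      filter_upwards [eventually_ge_atTop (max m₀ 1)] with m hm
      exact (key m (lt_of_lt_of_le Nat.one_pos (le_trans (le_max_right _ _) hm)) s hs
        (hsub.trans (hbox_mono (le_trans (le_max_left _ _) hm)))).1
    have hev2 : ∀ᶠ m in atTop, ν s ≤ μ s + μ (box m)ᶜ := by
      filter_upwards [eventually_ge_atTop (max m₀ 1)] with m hm
      exact (key m (lt_of_lt_of_le Nat.one_pos (le_trans (le_max_right _ _) hm)) s hs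
        (hsub.trans (hbox_mono (le_trans (le_max_left _ _) hm)))).2
    have ht1 : Tendsto (fun m => ν s + ν (box m)ᶜ) atTop (nhds (ν s)) := by
      have := Filter.Tendsto.add (tendsto_const_nhds (x := ν s) (f := atTop)) (hcomp ν)
      simpa using this
    have ht2 : Tendsto (fun m => μ s + μ (box m)ᶜ) atTop (nhds (μ s)) := by
      have := Filter.Tendsto.add (tendsto_const_nhds (x := μ s) (f := atTop)) (hcomp μ)
      simpa using this
    exact le_antisymm (ge_of_tendsto ht1 hev1) (ge_of_tendsto ht2 hev2)
  ext s hs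
  have hmono : Monotone fun m => s ∩ box m :=
    fun m m' hm => Set.inter_subset_inter le_rfl (hbox_mono hm)
  have hU : ⋃ m, s ∩ box m = s := by
    rw [← Set.inter_iUnion, hbox_univ, Set.inter_univ]
  have heq : ∀ m : ℕ, μ (s ∩ box m) = ν (s ∩ box m) :=
    fun m => hbdd m _ (hs.inter (hbox_meas m)) Set.inter_subset_right
  have t1 : Tendsto (fun m => μ (s ∩ box m)) atTop (nhds (μ s)) := by
    have := tendsto_measure_iUnion_atTop (μ := μ) hmono
    rw [hU] at this
    exact this
  have t2 : Tendsto (fun m => ν (s ∩ box m)) atTop (nhds (ν s)) := by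
    have := tendsto_measure_iUnion_atTop (μ := ν) hmono
    rw [hU] at this
    exact this
  rw [funext heq] at t1
  exact tendsto_nhds_unique t1 t2


theorem law_eq {ι Ω Ω' : Type*} [MeasurableSpace Ω] [MeasurableSpace Ω']
    (P : Measure Ω) (Q : Measure Ω') [IsProbabilityMeasure P] [IsProbabilityMeasure Q]
    (X : Ω → ι → ℝ) (Y : Ω' → ι → ℝ)
    (hX : ∀ t, Measurable fun ω => X ω t) (hY : ∀ t, Measurable fun ω => Y ω t)
    (h : ∀ (n : ℕ) (c : Fin n → ℝ) (t : Fin n → ι),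
      P.map (fun ω => ∑ i, c i * X ω (t i)) = Q.map (fun ω => ∑ i, c i * Y ω (t i))) :
    P.map X = Q.map Y := by
  classical
  have hXm : Measurable X := measurable_pi_lambda _ hX
  have hYm : Measurable Y := measurable_pi_lambda _ hY
  have hres : ∀ I : Finset ι, Measurable fun x : ι → ℝ => I.restrict x :=
    fun I => measurable_pi_lambda _ (fun i => measurable_pi_apply _)
  haveI hPX : IsProbabilityMeasure (P.map X) := Measure.isProbabilityMeasure_map hXm.aemeasurable
  haveI hQY : IsProbabilityMeasure (Q.map Y) := Measure.isProbabilityMeasure_map hYm.aemeasurable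
  haveI : ∀ I : Finset ι, IsFiniteMeasure ((P.map X).map I.restrict) := by
    intro I
    haveI : IsProbabilityMeasure ((P.map X).map I.restrict) :=
      Measure.isProbabilityMeasure_map (hres I).aemeasurable
    infer_instance
  refine IsProjectiveLimit.unique (P := fun I : Finset ι => (P.map X).map I.restrict)
    (fun I => rfl) (fun I => ?_)
  -- goal : (Q.map Y).map I.restrict = (P.map X).map I.restrict
  show (Q.map Y).map I.restrict = (P.map X).map I.restrict
  rw [Measure.map_map (hres I) hXm, Measure.map_map (hres I) hYm]
  haveI : IsProbabilityMeasure (P.map (I.restrict ∘ X)) :=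
    Measure.isProbabilityMeasure_map ((hres I).comp hXm).aemeasurable
  haveI : IsProbabilityMeasure (Q.map (I.restrict ∘ Y)) :=
    Measure.isProbabilityMeasure_map ((hres I).comp hYm).aemeasurable
  refine (cramerWold _ _ (fun c => ?_)).symm
  have hlin : Measurable (fun x : I → ℝ => ∑ i, c i * x i) :=
    Finset.univ.measurable_sum (fun i _ => (measurable_pi_apply _).const_mul _)
  rw [Measure.map_map hlin ((hres I).comp hXm), Measure.map_map hlin ((hres I).comp hYm)]
  let e := I.equivFin.symm
  have hcompX : ((fun x : I → ℝ => ∑ i, c i * x i) ∘ (I.restrict ∘ X))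
      = fun ω => ∑ j : Fin I.card, (c ∘ e) j * X ω ((fun j => ((e j : ι))) j) := by
    funext ω
    exact (Equiv.sum_comp e fun i : I => c i * X ω i).symm
  have hcompY : ((fun x : I → ℝ => ∑ i, c i * x i) ∘ (I.restrict ∘ Y))
      = fun ω => ∑ j : Fin I.card, (c ∘ e) j * Y ω ((fun j => ((e j : ι))) j) := by
    funext ω
    exact (Equiv.sum_comp e fun i : I => c i * Y ω i).symm
  rw [hcompX, hcompY]
  exact h I.card (c ∘ e) (fun j => (e j : ι))


end BridgeAux

lemma IsCenteredGaussian.fintype {Ω ι : Type*} [MeasurableSpace Ω] {P : Measure Ω}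
    {X : Ω → ι → ℝ} {D : Set ι} {K : ι → ι → ℝ} (h : IsCenteredGaussian P X D K)
    {κ : Type*} [Fintype κ] (c : κ → ℝ) (t : κ → ι) (ht : ∀ k, t k ∈ D) :
    Measure.map (fun ω => ∑ k, c k * X ω (t k)) P =
      gaussianReal 0 (∑ k, ∑ l, c k * c l * K (t k) (t l)).toNNReal := by
  classical
  let e := (Fintype.equivFin κ).symm
  have h2 := h.2 (Fintype.card κ) (c ∘ e) (t ∘ e) (fun i => ht _)
  have hfun : (fun ω => ∑ i, (c ∘ e) i * X ω ((t ∘ e) i)) =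
      (fun ω => ∑ k, c k * X ω (t k)) := by
    funext ω
    exact Equiv.sum_comp e (fun k => c k * X ω (t k))
  have hvar : (∑ i, ∑ j, (c ∘ e) i * (c ∘ e) j * K ((t ∘ e) i) ((t ∘ e) j)) =
      ∑ k, ∑ l, c k * c l * K (t k) (t l) := by
    calc ∑ i, ∑ j, (c ∘ e) i * (c ∘ e) j * K ((t ∘ e) i) ((t ∘ e) j)
        = ∑ i, ∑ l, c (e i) * c l * K (t (e i)) (t l) :=
          Finset.sum_congr rfl fun i _ => Equiv.sum_comp e (fun l => c (e i) * c l * K (t (e i)) (t l))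
      _ = ∑ k, ∑ l, c k * c l * K (t k) (t l) :=
          Equiv.sum_comp e (fun k => ∑ l, c k * c l * K (t k) (t l))
  rw [hfun, hvar] at h2
  exact h2

lemma IsCenteredGaussian.combo2 {Ω ι : Type*} [MeasurableSpace Ω] {P : Measure Ω}
    {X : Ω → ι → ℝ} {D : Set ι} {K : ι → ι → ℝ} (h : IsCenteredGaussian P X D K)
    {n : ℕ} (c α β : Fin n → ℝ) (f g : Fin n → ι)
    (hf : ∀ k, f k ∈ D) (hg : ∀ k, g k ∈ D) :
    Measure.map (fun ω => ∑ k, c k * (α k * X ω (f k) + β k * X ω (g k))) P =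
      gaussianReal 0 (∑ k, ∑ l, c k * c l *
        (α k * α l * K (f k) (f l) + α k * β l * K (f k) (g l)
          + β k * α l * K (g k) (f l) + β k * β l * K (g k) (g l))).toNNReal := by
  classical
  have h2 := h.fintype (κ := Fin n ⊕ Fin n)
    (Sum.elim (fun k => c k * α k) (fun k => c k * β k)) (Sum.elim f g)
    (by rintro (k | k) <;> [exact hf k; exact hg k])
  have hfun : (fun ω => ∑ p : Fin n ⊕ Fin n,
      Sum.elim (fun k => c k * α k) (fun k => c k * β k) p * X ω (Sum.elim f g p)) =
      (fun ω => ∑ k, c k * (α k * X ω (f k) + β k * X ω (g k))) := by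
    funext ω
    rw [Fintype.sum_sum_type, ← Finset.sum_add_distrib]
    exact Finset.sum_congr rfl fun k _ => by simp; ring
  have hvar : (∑ p : Fin n ⊕ Fin n, ∑ q : Fin n ⊕ Fin n,
      Sum.elim (fun k => c k * α k) (fun k => c k * β k) p *
      Sum.elim (fun k => c k * α k) (fun k => c k * β k) q *
      K (Sum.elim f g p) (Sum.elim f g q)) =
      ∑ k, ∑ l, c k * c l *
        (α k * α l * K (f k) (f l) + α k * β l * K (f k) (g l)
          + β k * α l * K (g k) (f l) + β k * β l * K (g k) (g l)) := by
    have inner : ∀ (a : ℝ) (u : ι), (∑ q : Fin n ⊕ Fin n,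
        a * Sum.elim (fun k => c k * α k) (fun k => c k * β k) q * K u (Sum.elim f g q)) =
        (∑ l, a * (c l * α l) * K u (f l)) + ∑ l, a * (c l * β l) * K u (g l) := by
      intro a u
      rw [Fintype.sum_sum_type]
      simp only [Sum.elim_inl, Sum.elim_inr]
    rw [Fintype.sum_sum_type]
    simp only [Sum.elim_inl, Sum.elim_inr, inner]
    rw [← Finset.sum_add_distrib]
    refine Finset.sum_congr rfl fun k _ => ?_
    rw [← Finset.sum_add_distrib, ← Finset.sum_add_distrib, ← Finset.sum_add_distrib]
    exact Finset.sum_congr rfl fun l _ => by ring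
  rw [hfun, hvar] at h2
  exact h2


lemma IsCenteredGaussian.combo2' {Ω ι : Type*} [MeasurableSpace Ω] {P : Measure Ω}
    {X : Ω → ι → ℝ} {D : Set ι} {K : ι → ι → ℝ} (h : IsCenteredGaussian P X D K)
    {n : ℕ} (c α β : Fin n → ℝ) (f g : Fin n → ι)
    (hf : ∀ k, f k ∈ D) (hg : ∀ k, g k ∈ D) {φ : Ω → ℝ} {V : ℝ}
    (hφ : ∀ ω, ∑ k, c k * (α k * X ω (f k) + β k * X ω (g k)) = φ ω)
    (hV : (∑ k, ∑ l, c k * c l *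
        (α k * α l * K (f k) (f l) + α k * β l * K (f k) (g l)
          + β k * α l * K (g k) (f l) + β k * β l * K (g k) (g l))) = V) :
    P.map φ = gaussianReal 0 V.toNNReal := by
  rw [← funext hφ, ← hV]
  exact h.combo2 c α β f g hf hg

namespace BridgeAux

section MainAux

variable {Ω : Type*} [MeasurableSpace Ω] {P : Measure Ω} {b W : Ω → ℝ → ℝ}

lemma memH1 (t : Icc (0:ℝ) (1/2)) : (t:ℝ) ∈ Icc (0:ℝ) 1 :=
  ⟨t.2.1, by linarith [t.2.2]⟩

lemma memH2 (t : Icc (0:ℝ) (1/2)) : 1 - (t:ℝ) ∈ Icc (0:ℝ) 1 :=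
  ⟨by linarith [t.2.2], by linarith [t.2.1]⟩

lemma memH3 (t : Icc (0:ℝ) (1/2)) : 2 * (t:ℝ) ∈ Icc (0:ℝ) 1 :=
  ⟨by linarith [t.2.1], by linarith [t.2.2]⟩

/-- covariance kernel of the antisymmetric part. -/
def VA {n : ℕ} (c : Fin n → ℝ) (t : Fin n → Icc (0:ℝ) (1/2)) : ℝ :=
  ∑ i, ∑ j, c i * c j * (min (t i : ℝ) (t j : ℝ) / 2 - (t i : ℝ) * (t j : ℝ))

/-- covariance kernel of the symmetric part. -/
def VS {n : ℕ} (c : Fin n → ℝ) (t : Fin n → Icc (0:ℝ) (1/2)) : ℝ :=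
  ∑ i, ∑ j, c i * c j * (min (t i : ℝ) (t j : ℝ) / 2)

/-- antisymmetric part of the bridge. -/
def Af (b : Ω → ℝ → ℝ) (ω : Ω) : Icc (0:ℝ) (1/2) → ℝ :=
  fun t => (b ω t - b ω (1 - (t:ℝ))) / 2

/-- symmetric part of the bridge. -/
def Sf (b : Ω → ℝ → ℝ) (ω : Ω) : Icc (0:ℝ) (1/2) → ℝ :=
  fun t => (b ω t + b ω (1 - (t:ℝ))) / 2

lemma lawA (hb : IsCenteredGaussian P b (Icc 0 1) (fun s t => min s t - s * t))
    {n : ℕ} (c : Fin n → ℝ) (t : Fin n → Icc (0:ℝ) (1/2)) :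
    P.map (fun ω => ∑ i, c i * Af b ω (t i)) = gaussianReal 0 (VA c t).toNNReal := by
  refine hb.combo2' c (fun _ => (1/2:ℝ)) (fun _ => -(1/2:ℝ))
    (fun i => ((t i : ℝ))) (fun i => 1 - (t i : ℝ)) (fun k => memH1 _) (fun k => memH2 _)
    (fun ω => Finset.sum_congr rfl fun i _ => by simp only [Af]; ring) ?_
  simp only [VA]
  refine Finset.sum_congr rfl fun i _ => Finset.sum_congr rfl fun j _ => ?_
  linear_combination (c i * c j) * covA (t i).2 (t j).2

lemma lawS (hb : IsCenteredGaussian P b (Icc 0 1) (fun s t => min s t - s * t))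
    {n : ℕ} (c : Fin n → ℝ) (t : Fin n → Icc (0:ℝ) (1/2)) :
    P.map (fun ω => ∑ i, c i * Sf b ω (t i)) = gaussianReal 0 (VS c t).toNNReal := by
  refine hb.combo2' c (fun _ => (1/2:ℝ)) (fun _ => (1/2:ℝ))
    (fun i => ((t i : ℝ))) (fun i => 1 - (t i : ℝ)) (fun k => memH1 _) (fun k => memH2 _)
    (fun ω => Finset.sum_congr rfl fun i _ => by simp only [Sf]; ring) ?_
  simp only [VS]
  refine Finset.sum_congr rfl fun i _ => Finset.sum_congr rfl fun j _ => ?_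
  linear_combination (c i * c j) * covS (t i).2 (t j).2

lemma lawA' (hb : IsCenteredGaussian P b (Icc 0 1) (fun s t => min s t - s * t))
    {n : ℕ} (c : Fin n → ℝ) (t : Fin n → Icc (0:ℝ) (1/2)) :
    P.map (fun ω => ∑ i, c i * (b ω (2 * (t i : ℝ)) / 2)) = gaussianReal 0 (VA c t).toNNReal := by
  refine hb.combo2' c (fun _ => (1/2:ℝ)) (fun _ => (0:ℝ))
    (fun i => 2 * (t i : ℝ)) (fun i => 2 * (t i : ℝ)) (fun k => memH3 _) (fun k => memH3 _)
    (fun ω => Finset.sum_congr rfl fun i _ => by ring) ?_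
  simp only [VA]
  refine Finset.sum_congr rfl fun i _ => Finset.sum_congr rfl fun j _ => ?_
  linear_combination (c i * c j / 4) * min_double (t i).2.1 (t j).2.1

lemma lawW' (hW : IsCenteredGaussian P W (Icc 0 1) (fun s t => min s t))
    {n : ℕ} (c : Fin n → ℝ) (t : Fin n → Icc (0:ℝ) (1/2)) :
    P.map (fun ω => ∑ i, c i * (W ω (2 * (t i : ℝ)) / 2)) = gaussianReal 0 (VS c t).toNNReal := by
  refine hW.combo2' c (fun _ => (1/2:ℝ)) (fun _ => (0:ℝ))
    (fun i => 2 * (t i : ℝ)) (fun i => 2 * (t i : ℝ)) (fun k => memH3 _) (fun k => memH3 _)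
    (fun ω => Finset.sum_congr rfl fun i _ => by ring) ?_
  simp only [VS]
  refine Finset.sum_congr rfl fun i _ => Finset.sum_congr rfl fun j _ => ?_
  linear_combination (c i * c j / 4) * min_double (t i).2.1 (t j).2.1

lemma VA_nonneg {n : ℕ} (c : Fin n → ℝ) (t : Fin n → Icc (0:ℝ) (1/2)) : 0 ≤ VA c t := by
  have hmul : ∀ u v : ℝ, (fun x => ((1/2) * gB u x) * ((1/2) * gB v x))
      = fun x => (1/4) * (gB u x * gB v x) := fun u v => funext fun x => by ring
  refine sumsum_integral_nonneg c (fun i => fun x => (1/2) * gB (2 * (t i : ℝ)) x)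
    (fun i j => ?_) _ (fun i j => ?_)
  · rw [hmul]
    exact (integrable_gB_mul _ _).const_mul _
  · rw [hmul, MeasureTheory.integral_const_mul,
      integral_gB_mul _ _ (memH3 (t i)) (memH3 (t j))]
    linear_combination (-(1/4)) * min_double (t i).2.1 (t j).2.1

lemma VS_nonneg {n : ℕ} (c : Fin n → ℝ) (t : Fin n → Icc (0:ℝ) (1/2)) : 0 ≤ VS c t := by
  have hmul : ∀ u v : ℝ, (fun x => ((1/2) * gW u x) * ((1/2) * gW v x))
      = fun x => (1/4) * (gW u x * gW v x) := fun u v => funext fun x => by ring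
  refine sumsum_integral_nonneg c (fun i => fun x => (1/2) * gW (2 * (t i : ℝ)) x)
    (fun i j => ?_) _ (fun i j => ?_)
  · rw [hmul]
    exact (integrable_gW_mul _ _).const_mul _
  · rw [hmul, MeasureTheory.integral_const_mul,
      integral_gW_mul _ _ (by linarith [(t i).2.1] : (0:ℝ) ≤ 2 * (t i : ℝ))
        (by linarith [(t j).2.1] : (0:ℝ) ≤ 2 * (t j : ℝ))]
    linear_combination (-(1/4)) * min_double (t i).2.1 (t j).2.1

/-! joint (padded) versions over a mixed tuple -/

/-- padded antisymmetric kernel. -/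
def kA : (Icc (0:ℝ) (1/2) ⊕ Icc (0:ℝ) (1/2)) → (Icc (0:ℝ) (1/2) ⊕ Icc (0:ℝ) (1/2)) → ℝ
  | .inl s, .inl t => min (s:ℝ) (t:ℝ) / 2 - (s:ℝ) * (t:ℝ)
  | _, _ => 0

/-- padded symmetric kernel. -/
def kS : (Icc (0:ℝ) (1/2) ⊕ Icc (0:ℝ) (1/2)) → (Icc (0:ℝ) (1/2) ⊕ Icc (0:ℝ) (1/2)) → ℝ
  | .inr s, .inr t => min (s:ℝ) (t:ℝ) / 2
  | _, _ => 0

def VAJ {n : ℕ} (c : Fin n → ℝ) (u : Fin n → (Icc (0:ℝ) (1/2) ⊕ Icc (0:ℝ) (1/2))) : ℝ :=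
  ∑ i, ∑ j, c i * c j * kA (u i) (u j)

def VSJ {n : ℕ} (c : Fin n → ℝ) (u : Fin n → (Icc (0:ℝ) (1/2) ⊕ Icc (0:ℝ) (1/2))) : ℝ :=
  ∑ i, ∑ j, c i * c j * kS (u i) (u j)

/-- time point of a mixed index. -/
def tm : (Icc (0:ℝ) (1/2) ⊕ Icc (0:ℝ) (1/2)) → ℝ := Sum.elim (fun t => (t:ℝ)) (fun t => (t:ℝ))

lemma tm_mem1 (p : Icc (0:ℝ) (1/2) ⊕ Icc (0:ℝ) (1/2)) : tm p ∈ Icc (0:ℝ) 1 := by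
  rcases p with t | t <;> exact memH1 t

lemma tm_mem2 (p : Icc (0:ℝ) (1/2) ⊕ Icc (0:ℝ) (1/2)) : 1 - tm p ∈ Icc (0:ℝ) 1 := by
  rcases p with t | t <;> exact memH2 t

lemma tm_memH (p : Icc (0:ℝ) (1/2) ⊕ Icc (0:ℝ) (1/2)) : tm p ∈ Icc (0:ℝ) (1/2) := by
  rcases p with t | t <;> exact t.2

lemma lawFJ (hb : IsCenteredGaussian P b (Icc 0 1) (fun s t => min s t - s * t))
    {n : ℕ} (c : Fin n → ℝ) (u : Fin n → (Icc (0:ℝ) (1/2) ⊕ Icc (0:ℝ) (1/2))) :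
    P.map (fun ω => ∑ i, c i * Sum.elim (Af b ω) (fun _ => (0:ℝ)) (u i))
      = gaussianReal 0 (VAJ c u).toNNReal := by
  refine hb.combo2' c (fun i => Sum.elim (fun _ => (1/2:ℝ)) (fun _ => (0:ℝ)) (u i))
    (fun i => Sum.elim (fun _ => -(1/2:ℝ)) (fun _ => (0:ℝ)) (u i))
    (fun i => tm (u i)) (fun i => 1 - tm (u i))
    (fun k => tm_mem1 _) (fun k => tm_mem2 _)
    (fun ω => Finset.sum_congr rfl fun i _ => ?_) ?_
  · rcases hui : u i with s | s <;>
      simp only [hui, Sum.elim_inl, Sum.elim_inr, tm, Af] <;> ring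
  · simp only [VAJ]
    refine Finset.sum_congr rfl fun i _ => Finset.sum_congr rfl fun j _ => ?_
    rcases hui : u i with s | s <;> rcases huj : u j with r | r <;>
      simp only [hui, huj, Sum.elim_inl, Sum.elim_inr, tm, kA]
    · linear_combination (c i * c j) * covA s.2 r.2
    · ring
    · ring
    · ring

lemma lawGJ (hb : IsCenteredGaussian P b (Icc 0 1) (fun s t => min s t - s * t))
    {n : ℕ} (c : Fin n → ℝ) (u : Fin n → (Icc (0:ℝ) (1/2) ⊕ Icc (0:ℝ) (1/2))) :
    P.map (fun ω => ∑ i, c i * Sum.elim (fun _ => (0:ℝ)) (Sf b ω) (u i))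
      = gaussianReal 0 (VSJ c u).toNNReal := by
  refine hb.combo2' c (fun i => Sum.elim (fun _ => (0:ℝ)) (fun _ => (1/2:ℝ)) (u i))
    (fun i => Sum.elim (fun _ => (0:ℝ)) (fun _ => (1/2:ℝ)) (u i))
    (fun i => tm (u i)) (fun i => 1 - tm (u i))
    (fun k => tm_mem1 _) (fun k => tm_mem2 _)
    (fun ω => Finset.sum_congr rfl fun i _ => ?_) ?_
  · rcases hui : u i with s | s <;>
      simp only [hui, Sum.elim_inl, Sum.elim_inr, tm, Sf] <;> ring
  · simp only [VSJ]
    refine Finset.sum_congr rfl fun i _ => Finset.sum_congr rfl fun j _ => ?_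
    rcases hui : u i with s | s <;> rcases huj : u j with r | r <;>
      simp only [hui, huj, Sum.elim_inl, Sum.elim_inr, tm, kS]
    · ring
    · ring
    · ring
    · linear_combination (c i * c j) * covS s.2 r.2

lemma lawZJ (hb : IsCenteredGaussian P b (Icc 0 1) (fun s t => min s t - s * t))
    {n : ℕ} (c : Fin n → ℝ) (u : Fin n → (Icc (0:ℝ) (1/2) ⊕ Icc (0:ℝ) (1/2))) :
    P.map (fun ω => ∑ i, c i * Sum.elim (Af b ω) (Sf b ω) (u i))
      = gaussianReal 0 (VAJ c u + VSJ c u).toNNReal := by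
  refine hb.combo2' c (fun _ => (1/2:ℝ))
    (fun i => Sum.elim (fun _ => -(1/2:ℝ)) (fun _ => (1/2:ℝ)) (u i))
    (fun i => tm (u i)) (fun i => 1 - tm (u i))
    (fun k => tm_mem1 _) (fun k => tm_mem2 _)
    (fun ω => Finset.sum_congr rfl fun i _ => ?_) ?_
  · rcases hui : u i with s | s <;>
      simp only [hui, Sum.elim_inl, Sum.elim_inr, tm, Af, Sf] <;> ring
  · simp only [VAJ, VSJ, ← Finset.sum_add_distrib]
    refine Finset.sum_congr rfl fun i _ => Finset.sum_congr rfl fun j _ => ?_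
    rcases hui : u i with s | s <;> rcases huj : u j with r | r <;>
      simp only [hui, huj, Sum.elim_inl, Sum.elim_inr, tm, kA, kS]
    · linear_combination (c i * c j) * covA s.2 r.2
    · linear_combination (c i * c j) * covAS s.2 r.2
    · linear_combination (c i * c j) * covSA s.2 r.2
    · linear_combination (c i * c j) * covS s.2 r.2

lemma VAJ_nonneg {n : ℕ} (c : Fin n → ℝ) (u : Fin n → (Icc (0:ℝ) (1/2) ⊕ Icc (0:ℝ) (1/2))) :
    0 ≤ VAJ c u := by
  classical
  have hmul : ∀ w v : ℝ, (fun x => ((1/2) * gB w x) * ((1/2) * gB v x))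
      = fun x => (1/4) * (gB w x * gB v x) := fun w v => funext fun x => by ring
  refine sumsum_integral_nonneg c
    (fun i => Sum.elim (fun t : Icc (0:ℝ) (1/2) => fun x => (1/2) * gB (2 * (t:ℝ)) x)
      (fun _ => fun _ => (0:ℝ)) (u i)) (fun i j => ?_) _ (fun i j => ?_)
  · rcases hui : u i with s | s <;> rcases huj : u j with r | r <;>
      simp only [hui, huj, Sum.elim_inl, Sum.elim_inr]
    · rw [hmul]; exact (integrable_gB_mul _ _).const_mul _
    · simpa using (integrable_const (0:ℝ))
    · simpa using (integrable_const (0:ℝ))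
    · simpa using (integrable_const (0:ℝ))
  · rcases hui : u i with s | s <;> rcases huj : u j with r | r <;>
      simp only [hui, huj, Sum.elim_inl, Sum.elim_inr, kA]
    · rw [hmul, MeasureTheory.integral_const_mul,
        integral_gB_mul _ _ (memH3 s) (memH3 r)]
      linear_combination (-(1/4)) * min_double s.2.1 r.2.1
    · simp
    · simp
    · simp

lemma VSJ_nonneg {n : ℕ} (c : Fin n → ℝ) (u : Fin n → (Icc (0:ℝ) (1/2) ⊕ Icc (0:ℝ) (1/2))) :
    0 ≤ VSJ c u := by
  classical
  have hmul : ∀ w v : ℝ, (fun x => ((1/2) * gW w x) * ((1/2) * gW v x))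
      = fun x => (1/4) * (gW w x * gW v x) := fun w v => funext fun x => by ring
  refine sumsum_integral_nonneg c
    (fun i => Sum.elim (fun _ => fun _ => (0:ℝ))
      (fun t : Icc (0:ℝ) (1/2) => fun x => (1/2) * gW (2 * (t:ℝ)) x) (u i))
    (fun i j => ?_) _ (fun i j => ?_)
  · rcases hui : u i with s | s <;> rcases huj : u j with r | r <;>
      simp only [hui, huj, Sum.elim_inl, Sum.elim_inr]
    · simpa using (integrable_const (0:ℝ))
    · simpa using (integrable_const (0:ℝ))
    · simpa using (integrable_const (0:ℝ))
    · rw [hmul]; exact (integrable_gW_mul _ _).const_mul _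
  · rcases hui : u i with s | s <;> rcases huj : u j with r | r <;>
      simp only [hui, huj, Sum.elim_inl, Sum.elim_inr, kS]
    · simp
    · simp
    · simp
    · rw [hmul, MeasureTheory.integral_const_mul,
        integral_gW_mul _ _ (by linarith [s.2.1] : (0:ℝ) ≤ 2 * (s:ℝ))
          (by linarith [r.2.1] : (0:ℝ) ≤ 2 * (r:ℝ))]
      linear_combination (-(1/4)) * min_double s.2.1 r.2.1

lemma measAf (hbm : ∀ t : ℝ, Measurable fun ω => b ω t) (t : Icc (0:ℝ) (1/2)) :
    Measurable fun ω => Af b ω t :=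
  ((hbm t).sub (hbm (1 - (t:ℝ)))).div_const 2

lemma measSf (hbm : ∀ t : ℝ, Measurable fun ω => b ω t) (t : Icc (0:ℝ) (1/2)) :
    Measurable fun ω => Sf b ω t :=
  ((hbm t).add (hbm (1 - (t:ℝ)))).div_const 2

lemma lawJointEq [IsProbabilityMeasure P]
    (hb : IsCenteredGaussian P b (Icc 0 1) (fun s t => min s t - s * t))
    {n : ℕ} (c : Fin n → ℝ) (u : Fin n → (Icc (0:ℝ) (1/2) ⊕ Icc (0:ℝ) (1/2))) :
    P.map (fun ω => ∑ i, c i * Sum.elim (Af b ω) (Sf b ω) (u i))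
      = (P.prod P).map (fun p : Ω × Ω => ∑ i, c i * Sum.elim (Af b p.1) (Sf b p.2) (u i)) := by
  classical
  have hF : Measurable fun ω => ∑ i, c i * Sum.elim (Af b ω) (fun _ => (0:ℝ)) (u i) := by
    refine Finset.univ.measurable_sum fun i _ => ?_
    rcases hui : u i with s | s <;> simp only [hui, Sum.elim_inl, Sum.elim_inr]
    · exact (measAf hb.1 s).const_mul _
    · exact measurable_const
  have hG : Measurable fun ω => ∑ i, c i * Sum.elim (fun _ => (0:ℝ)) (Sf b ω) (u i) := by
    refine Finset.univ.measurable_sum fun i _ => ?_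
    rcases hui : u i with s | s <;> simp only [hui, Sum.elim_inl, Sum.elim_inr]
    · exact measurable_const
    · exact (measSf hb.1 s).const_mul _
  have hsum : (fun p : Ω × Ω => ∑ i, c i * Sum.elim (Af b p.1) (Sf b p.2) (u i))
      = (fun p : Ω × Ω => (∑ i, c i * Sum.elim (Af b p.1) (fun _ => (0:ℝ)) (u i))
          + (∑ i, c i * Sum.elim (fun _ => (0:ℝ)) (Sf b p.2) (u i))) := by
    funext p
    rw [← Finset.sum_add_distrib]
    refine Finset.sum_congr rfl fun i _ => ?_
    rcases hui : u i with s | s <;> simp only [hui, Sum.elim_inl, Sum.elim_inr] <;> ring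
  rw [lawZJ hb c u, hsum,
    map_sum_prod P P hF hG (lawFJ hb c u) (lawGJ hb c u),
    Real.toNNReal_add (VAJ_nonneg c u) (VSJ_nonneg c u)]

end MainAux

end BridgeAux

/-- The antisymmetric and symmetric parts of a Brownian bridge around `t = 1/2`,
restricted to `[0,1/2]`, are independent; `Ab ∼ (b(2t)/2)` and `Sb ∼ (W(2t)/2)`
for a standard Brownian motion `W`. -/
theorem bridge_sym_anti_parts {Ω : Type*} [MeasurableSpace Ω] (P : Measure Ω)
    [IsProbabilityMeasure P] (b W : Ω → ℝ → ℝ)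
    (hb : IsBrownianBridge P b) (hW : IsBrownianMotion P W)
    (hbc : ∀ ω, Continuous (b ω)) :
    IndepFun (fun ω => fun t : Icc (0:ℝ) (1/2) => (b ω t - b ω (1 - t)) / 2)
        (fun ω => fun t : Icc (0:ℝ) (1/2) => (b ω t + b ω (1 - t)) / 2) P ∧
    Measure.map (fun ω => fun t : Icc (0:ℝ) (1/2) => (b ω t - b ω (1 - t)) / 2) P =
      Measure.map (fun ω => fun t : Icc (0:ℝ) (1/2) => b ω (2 * t) / 2) P ∧
    Measure.map (fun ω => fun t : Icc (0:ℝ) (1/2) => (b ω t + b ω (1 - t)) / 2) P =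
      Measure.map (fun ω => fun t : Icc (0:ℝ) (1/2) => W ω (2 * t) / 2) P := by
  classical
  have hbm := hb.1
  have hWm := hW.1
  have hAm : Measurable (fun ω => fun t : Icc (0:ℝ) (1/2) => (b ω t - b ω (1 - t)) / 2) :=
    measurable_pi_lambda _ (fun t => BridgeAux.measAf hbm t)
  have hSm : Measurable (fun ω => fun t : Icc (0:ℝ) (1/2) => (b ω t + b ω (1 - t)) / 2) :=
    measurable_pi_lambda _ (fun t => BridgeAux.measSf hbm t)
  refine ⟨?_, ?_, ?_⟩
  · -- independence
    rw [ProbabilityTheory.indepFun_iff_map_prod_eq_prod_map_map hAm.aemeasurable hSm.aemeasurable]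
    set e := MeasurableEquiv.sumPiEquivProdPi
      (fun _ : (Icc (0:ℝ) (1/2) ⊕ Icc (0:ℝ) (1/2)) => ℝ) with hedef
    have hZ : Measurable (fun ω => Sum.elim (BridgeAux.Af b ω) (BridgeAux.Sf b ω)) :=
      measurable_pi_lambda _ (fun p => by
        rcases p with t | t
        exacts [BridgeAux.measAf hbm t, BridgeAux.measSf hbm t])
    have hZ' : Measurable (fun p : Ω × Ω => Sum.elim (BridgeAux.Af b p.1) (BridgeAux.Sf b p.2)) :=
      measurable_pi_lambda _ (fun q => by
        rcases q with t | t
        exacts [(BridgeAux.measAf hbm t).comp measurable_fst,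
          (BridgeAux.measSf hbm t).comp measurable_snd])
    have hlaw : P.map (fun ω => Sum.elim (BridgeAux.Af b ω) (BridgeAux.Sf b ω))
        = (P.prod P).map (fun p : Ω × Ω => Sum.elim (BridgeAux.Af b p.1) (BridgeAux.Sf b p.2)) :=
      BridgeAux.law_eq P (P.prod P) _ _
        (fun p => by
          rcases p with t | t
          exacts [BridgeAux.measAf hbm t, BridgeAux.measSf hbm t])
        (fun p => by
          rcases p with t | t
          exacts [(BridgeAux.measAf hbm t).comp measurable_fst,
            (BridgeAux.measSf hbm t).comp measurable_snd])
        (fun n c u => BridgeAux.lawJointEq hb c u)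
    show (Measure.map (⇑e ∘ fun ω => Sum.elim (BridgeAux.Af b ω) (BridgeAux.Sf b ω)) P)
        = (Measure.map (fun ω => fun t : Icc (0:ℝ) (1/2) => (b ω t - b ω (1 - t)) / 2) P).prod
          (Measure.map (fun ω => fun t : Icc (0:ℝ) (1/2) => (b ω t + b ω (1 - t)) / 2) P)
    rw [← Measure.map_map e.measurable hZ, hlaw, Measure.map_map e.measurable hZ',
      Measure.map_prod_map _ _ hAm hSm]
    rfl
  · -- antisymmetric part
    exact BridgeAux.law_eq P P _ _
      (fun t => BridgeAux.measAf hbm t)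
      (fun t => (hbm (2 * (t:ℝ))).div_const 2)
      (fun n c t => (BridgeAux.lawA hb c t).trans (BridgeAux.lawA' hb c t).symm)
  · -- symmetric part
    exact BridgeAux.law_eq P P _ _
      (fun t => BridgeAux.measSf hbm t)
      (fun t => (hWm (2 * (t:ℝ))).div_const 2)
      (fun n c t => (BridgeAux.lawS hb c t).trans (BridgeAux.lawW' hW c t).symm)
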